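/- arXiv:1706.03124 — 2 statements merged into one kernel-verified Lean document; each statement's English description precedes it below -/
import Mathlib

section
/- Suppose the sequence (q_k) is periodic, i.e., there exists a positive integer p with q_{k+p} = q_k for all k ≥ 1. Let x ∈ [0,1] be given by a Cantor series representation x = ∑_{k=1}^∞ ε_k/(q_1 q_2 ⋯ q_k). Then x is a rational number if and only if the digit sequence (ε_k) is ultimately periodic, i.e., there exist positive integers N and T such that ε_{k+T} = ε_k for all k ≥ N. -/
open Finset Filter

namespace CantorAux

variable (q ε : ℕ → ℕ)

noncomputable def cterm (n j : ℕ) : ℝ :=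
  (ε (n + j) : ℝ) / ∏ i ∈ Finset.range (j + 1), (q (n + i) : ℝ)

noncomputable def ctail (n : ℕ) : ℝ := ∑' j, cterm q ε n j

variable {q ε}

lemma qpos (hq : ∀ k, 2 ≤ q k) (k : ℕ) : (0 : ℝ) < (q k : ℝ) := by
  exact_mod_cast Nat.lt_of_lt_of_le (by norm_num) (hq k)

lemma prod_pos (hq : ∀ k, 2 ≤ q k) (n m : ℕ) :
    (0 : ℝ) < ∏ i ∈ Finset.range m, (q (n + i) : ℝ) :=
  Finset.prod_pos fun i _ => qpos hq _

lemma cterm_nonneg (hq : ∀ k, 2 ≤ q k) (n j : ℕ) : 0 ≤ cterm q ε n j :=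
  div_nonneg (Nat.cast_nonneg _) (prod_pos hq n (j + 1)).le

lemma sum_cterm_le (hq : ∀ k, 2 ≤ q k) (hε : ∀ k, ε k < q k) (n m : ℕ) :
    ∑ j ∈ Finset.range m, cterm q ε n j
      ≤ 1 - 1 / ∏ i ∈ Finset.range m, (q (n + i) : ℝ) := by
  induction m with
  | zero => simp
  | succ m ih =>
    rw [Finset.sum_range_succ, Finset.prod_range_succ]
    have hP := prod_pos hq n m
    have hqm := qpos hq (n + m)
    have hnum : (ε (n + m) : ℝ) ≤ (q (n + m) : ℝ) - 1 := by
      have := hε (n + m)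
      have : (ε (n + m) : ℝ) + 1 ≤ (q (n + m) : ℝ) := by exact_mod_cast this
      linarith
    have hterm : cterm q ε n m ≤ ((q (n + m) : ℝ) - 1) /
        ((∏ i ∈ Finset.range m, (q (n + i) : ℝ)) * q (n + m)) := by
      rw [cterm, Finset.prod_range_succ]
      gcongr
    calc ∑ j ∈ Finset.range m, cterm q ε n j + cterm q ε n m
        ≤ (1 - 1 / ∏ i ∈ Finset.range m, (q (n + i) : ℝ)) +
          ((q (n + m) : ℝ) - 1) /
            ((∏ i ∈ Finset.range m, (q (n + i) : ℝ)) * q (n + m)) :=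
          add_le_add ih hterm
      _ = 1 - 1 / ((∏ i ∈ Finset.range m, (q (n + i) : ℝ)) * q (n + m)) := by
          field_simp
          ring

lemma summable_cterm (hq : ∀ k, 2 ≤ q k) (hε : ∀ k, ε k < q k) (n : ℕ) :
    Summable (cterm q ε n) := by
  apply summable_of_sum_range_le (c := 1) (cterm_nonneg hq n)
  intro m
  exact (sum_cterm_le hq hε n m).trans (by
    have := prod_pos hq n m
    have : 0 < 1 / ∏ i ∈ Finset.range m, (q (n + i) : ℝ) := by positivity
    linarith)

lemma ctail_nonneg (hq : ∀ k, 2 ≤ q k) (n : ℕ) : 0 ≤ ctail q ε n :=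
  tsum_nonneg (cterm_nonneg hq n)

lemma ctail_le_one (hq : ∀ k, 2 ≤ q k) (hε : ∀ k, ε k < q k) (n : ℕ) :
    ctail q ε n ≤ 1 := by
  apply Real.tsum_le_of_sum_range_le (cterm_nonneg hq n)
  intro m
  exact (sum_cterm_le hq hε n m).trans (by
    have := prod_pos hq n m
    have : 0 < 1 / ∏ i ∈ Finset.range m, (q (n + i) : ℝ) := by positivity
    linarith)

lemma ctail_rec (hq : ∀ k, 2 ≤ q k) (hε : ∀ k, ε k < q k) (n : ℕ) :
    ctail q ε n = ((ε n : ℝ) + ctail q ε (n + 1)) / q n := by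
  have hs := summable_cterm hq hε (n := n)
  rw [ctail, Summable.tsum_eq_zero_add hs]
  have h0 : cterm q ε n 0 = (ε n : ℝ) / q n := by simp [cterm]
  have hprod : ∀ j : ℕ, ∏ i ∈ Finset.range (j + 1 + 1), (q (n + i) : ℝ)
      = (q n : ℝ) * ∏ i ∈ Finset.range (j + 1), (q (n + 1 + i) : ℝ) := by
    intro j
    rw [Finset.prod_range_succ']
    simp only [Nat.add_zero]
    rw [mul_comm]
    congr 1
    apply Finset.prod_congr rfl
    intro i _
    rw [show n + (i + 1) = n + 1 + i from by omega]
  have hshift : ∀ j, cterm q ε n (j + 1) = cterm q ε (n + 1) j / q n := by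
    intro j
    rw [cterm, cterm, show n + (j + 1) = n + 1 + j from by omega, hprod, div_div]
    ring
  rw [h0]
  simp only [hshift]
  rw [tsum_div_const]
  rw [add_div]
  rfl

end CantorAux

namespace CantorAux

variable {q ε : ℕ → ℕ}

lemma ctail_split (hq : ∀ k, 2 ≤ q k) (hε : ∀ k, ε k < q k) (n j : ℕ) :
    ctail q ε n = (∑ k ∈ Finset.range j, cterm q ε n k)
      + ctail q ε (n + j) / ∏ i ∈ Finset.range j, (q (n + i) : ℝ) := by
  induction j with
  | zero => simp
  | succ j ih =>
    rw [Finset.sum_range_succ, Finset.prod_range_succ, ih,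
      ctail_rec hq hε (n + j), cterm]
    have hP := (prod_pos hq n j).ne'
    have hqj := (qpos hq (n + j)).ne'
    rw [Finset.prod_range_succ, show n + (j + 1) = n + j + 1 from rfl]
    field_simp
    ring

lemma ctail_zero (hx : True) :
    ctail q ε 0 = ∑' k : ℕ, (ε k : ℝ) / ∏ i ∈ Finset.range (k + 1), (q i : ℝ) := by
  unfold ctail cterm
  simp

lemma ctail_step (hq : ∀ k, 2 ≤ q k) (hε : ∀ k, ε k < q k) {a b : ℕ}
    (hqab : q a = q b) (hT : ctail q ε a = ctail q ε b)
    (ha1 : ctail q ε (a + 1) < 1) (hb1 : ctail q ε (b + 1) < 1) :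
    ε a = ε b ∧ ctail q ε (a + 1) = ctail q ε (b + 1) := by
  have h1 : (ε a : ℝ) + ctail q ε (a + 1) = (ε b : ℝ) + ctail q ε (b + 1) := by
    have ea := ctail_rec hq hε a
    have eb := ctail_rec hq hε b
    rw [ea, eb, hqab] at hT
    field_simp [(qpos hq b).ne'] at hT
    linarith
  have ha0 := ctail_nonneg (ε := ε) hq (a + 1)
  have hb0 := ctail_nonneg (ε := ε) hq (b + 1)
  have hint : ((ε a : ℤ) - (ε b : ℤ) : ℝ) = ctail q ε (b + 1) - ctail q ε (a + 1) := by
    push_cast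
    linarith
  have habs : |(ε a : ℤ) - (ε b : ℤ)| < 1 := by
    have : |((ε a : ℤ) - (ε b : ℤ) : ℝ)| < 1 := by
      rw [hint, abs_lt]; constructor <;> linarith
    exact_mod_cast this
  rw [abs_lt] at habs
  have hee : ε a = ε b := by omega
  refine ⟨hee, ?_⟩
  have : (ε a : ℝ) = (ε b : ℝ) := by exact_mod_cast hee
  linarith

end CantorAux

open CantorAux

/-- (Cantor) If the basis sequence `(q_k)` is periodic, a number
`x ∈ [0,1]` represented by the Cantor series `x = ∑ ε_k / (q_1 ⋯ q_k)` is rational iff the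
digit sequence `(ε_k)` is ultimately periodic. (Sequences are 0-indexed.) -/
theorem cantor_periodic_rational_iff_eventually_periodic_digits
    (q ε : ℕ → ℕ) (hq : ∀ k, 2 ≤ q k) (hε : ∀ k, ε k < q k)
    (hper : ∃ p : ℕ, 0 < p ∧ ∀ k, q (k + p) = q k)
    (x : ℝ) (hmem : x ∈ Set.Icc (0 : ℝ) 1)
    (hx : x = ∑' k : ℕ, (ε k : ℝ) / ∏ i ∈ Finset.range (k + 1), (q i : ℝ)) :
    (∃ r : ℚ, x = (r : ℝ)) ↔
      ∃ N T : ℕ, 0 < T ∧ ∀ k ≥ N, ε (k + T) = ε k := by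
  obtain ⟨p, hp, hqp⟩ := hper
  have hqmul : ∀ t k, q (k + p * t) = q k := by
    intro t
    induction t with
    | zero => simp
    | succ t ih =>
      intro k
      rw [Nat.mul_succ, ← Nat.add_assoc, hqp, ih]
  have hT0 : ctail q ε 0 = x := by rw [ctail_zero trivial, ← hx]
  have hsplit0 : ∀ n, x = (∑ k ∈ Finset.range n, cterm q ε 0 k)
      + ctail q ε n / ∏ i ∈ Finset.range n, (q i : ℝ) := by
    intro n
    have h := ctail_split hq hε 0 n
    simp only [Nat.zero_add] at h
    rw [← hT0]
    exact h
  constructor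
  · rintro ⟨r, hr⟩
    by_cases hone : ∃ n, ctail q ε n = 1
    · -- tail equal to one: digits are eventually q k - 1
      obtain ⟨N, hN⟩ := hone
      have key : ∀ j, ctail q ε (N + j) = 1 := by
        intro j
        induction j with
        | zero => simpa using hN
        | succ j ih =>
          have hrec := ctail_rec hq hε (N + j)
          rw [ih] at hrec
          have h2 : (ε (N + j) : ℝ) + ctail q ε (N + j + 1) = q (N + j) := by
            field_simp [(qpos hq (N + j)).ne'] at hrec
            linarith
          have hεle : (ε (N + j) : ℝ) ≤ (q (N + j) : ℝ) - 1 := by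
            have := hε (N + j)
            have : (ε (N + j) : ℝ) + 1 ≤ (q (N + j) : ℝ) := by exact_mod_cast this
            linarith
          have hle1 := ctail_le_one hq hε (N + j + 1)
          have hfin : ctail q ε (N + j + 1) = 1 := by linarith
          rw [show N + (j + 1) = N + j + 1 from rfl]
          exact hfin
      have keyε : ∀ j, ε (N + j) + 1 = q (N + j) := by
        intro j
        have hrec := ctail_rec hq hε (N + j)
        rw [key j, show N + j + 1 = N + (j + 1) from rfl, key (j + 1)] at hrec
        have h2 : (ε (N + j) : ℝ) + 1 = q (N + j) := by
          field_simp [(qpos hq (N + j)).ne'] at hrec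
          linarith
        exact_mod_cast h2
      refine ⟨N, p, hp, ?_⟩
      intro k hk
      obtain ⟨j, rfl⟩ := Nat.exists_eq_add_of_le hk
      have h1 := keyε j
      have h2 := keyε (j + p)
      rw [← Nat.add_assoc] at h2
      have h3 : q (N + j + p) = q (N + j) := hqp _
      omega
    · push_neg at hone
      have hlt : ∀ n, ctail q ε n < 1 :=
        fun n => lt_of_le_of_ne (ctail_le_one hq hε n) (hone n)
      set A : ℕ → ℕ := fun n => ∑ k ∈ Finset.range n, ε k * ∏ i ∈ Finset.Ico (k + 1) n, q i
        with hAdef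
      have hAn : ∀ n, (A n : ℝ) = (∏ i ∈ Finset.range n, (q i : ℝ)) *
          ∑ k ∈ Finset.range n, cterm q ε 0 k := by
        intro n
        rw [hAdef]
        push_cast
        rw [Finset.mul_sum]
        apply Finset.sum_congr rfl
        intro k hk
        have hkn : k + 1 ≤ n := Finset.mem_range.mp hk
        simp only [cterm, Nat.zero_add]
        rw [← Finset.prod_range_mul_prod_Ico (fun i => (q i : ℝ)) hkn]
        have h1 := (prod_pos hq 0 (k + 1))
        simp only [Nat.zero_add] at h1
        field_simp
      have hTn : ∀ n, ctail q ε n = (∏ i ∈ Finset.range n, (q i : ℝ)) * x - (A n : ℝ) := by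
        intro n
        have h := hsplit0 n
        have hPpos : (0:ℝ) < ∏ i ∈ Finset.range n, (q i : ℝ) :=
          Finset.prod_pos fun i _ => qpos hq i
        rw [hAn n]
        field_simp at h ⊢
        linarith [h]
      have hdenpos : (0:ℝ) < (r.den : ℝ) := by exact_mod_cast r.pos
      have hnum : (r : ℝ) * (r.den : ℝ) = (r.num : ℝ) := by
        have h := Rat.num_div_den r
        have h2 : (r : ℝ) = (r.num : ℝ) / (r.den : ℝ) := by exact_mod_cast h.symm
        rw [h2]
        field_simp
      set z : ℕ → ℤ := fun n =>
          (∏ i ∈ Finset.range n, (q i : ℤ)) * r.num - (A n : ℤ) * (r.den : ℤ) with hzdef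
      have hz : ∀ n, (z n : ℝ) = ctail q ε n * (r.den : ℝ) := by
        intro n
        rw [hzdef]
        push_cast
        rw [hTn n, hr]
        linear_combination (-(∏ i ∈ Finset.range n, (q i : ℝ))) * hnum
      have hz0 : ∀ n, 0 ≤ z n := by
        intro n
        have h : (0:ℝ) ≤ (z n : ℝ) := by
          rw [hz n]; exact mul_nonneg (ctail_nonneg hq n) hdenpos.le
        exact_mod_cast h
      have hzle : ∀ n, z n ≤ (r.den : ℤ) := by
        intro n
        have h : (z n : ℝ) ≤ (r.den : ℝ) := by
          rw [hz n]
          calc ctail q ε n * (r.den : ℝ) ≤ 1 * (r.den : ℝ) :=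
                mul_le_mul_of_nonneg_right (ctail_le_one hq hε n) hdenpos.le
            _ = (r.den : ℝ) := one_mul _
        exact_mod_cast h
      have main : ∀ a b : ℕ, a < b → a % p = b % p → z a = z b →
          ∃ N T : ℕ, 0 < T ∧ ∀ k ≥ N, ε (k + T) = ε k := by
        intro a b hab hmod hzab
        have hTab : ctail q ε a = ctail q ε b := by
          have h1 := hz a
          have h2 := hz b
          rw [hzab] at h1
          exact mul_right_cancel₀ hdenpos.ne' (h1.symm.trans h2)
        obtain ⟨t, ht⟩ := (Nat.modEq_iff_dvd' hab.le).mp hmod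
        have hL : 0 < b - a := by omega
        have hqL : ∀ k, q (k + (b - a)) = q k := by
          intro k; rw [ht]; exact hqmul t k
        have key : ∀ j, ctail q ε (a + j) = ctail q ε (b + j) := by
          intro j
          induction j with
          | zero => simpa using hTab
          | succ j ih =>
            have hqab : q (a + j) = q (b + j) := by
              rw [show b + j = (a + j) + (b - a) from by omega, hqL]
            have h := (ctail_step hq hε hqab ih (hlt _) (hlt _)).2
            rw [show a + (j + 1) = a + j + 1 from rfl, show b + (j + 1) = b + j + 1 from rfl]
            exact h
        have keyε : ∀ j, ε (a + j) = ε (b + j) := by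
          intro j
          have hqab : q (a + j) = q (b + j) := by
            rw [show b + j = (a + j) + (b - a) from by omega, hqL]
          exact (ctail_step hq hε hqab (key j) (hlt _) (hlt _)).1
        refine ⟨a, b - a, hL, ?_⟩
        intro k hk
        obtain ⟨j, rfl⟩ := Nat.exists_eq_add_of_le hk
        rw [show a + j + (b - a) = b + j from by omega]
        exact (keyε j).symm
      let g : ℕ → Fin p × Fin (r.den + 1) := fun n =>
        (⟨n % p, Nat.mod_lt n hp⟩,
         ⟨(z n).toNat, by have h1 := hz0 n; have h2 := hzle n; omega⟩)
      obtain ⟨a, b, hab, hgab⟩ := Finite.exists_ne_map_eq_of_infinite g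
      have hmod : a % p = b % p := congrArg (fun x => (x.1 : ℕ)) hgab
      have hzn : (z a).toNat = (z b).toNat := congrArg (fun x => (x.2 : ℕ)) hgab
      have hzab : z a = z b := by
        have h1 := hz0 a
        have h2 := hz0 b
        omega
      rcases Ne.lt_or_gt hab with h | h
      · exact main a b h hmod hzab
      · exact main b a h hmod.symm hzab.symm
  · rintro ⟨N, T, hTpos, hep⟩
    have hεiter : ∀ m, ∀ k ≥ N, ε (k + T * m) = ε k := by
      intro m
      induction m with
      | zero => simp
      | succ m ih =>
        intro k hk
        rw [Nat.mul_succ, ← Nat.add_assoc, hep _ (by omega), ih k hk]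
    set L := T * p with hLdef
    have hL : 0 < L := Nat.mul_pos hTpos hp
    have hεL : ∀ k ≥ N, ε (k + L) = ε k := fun k hk => hεiter p k hk
    have hqL : ∀ k, q (k + L) = q k := by
      intro k
      rw [hLdef, show T * p = p * T from Nat.mul_comm _ _]
      exact hqmul T k
    have htaileq : ctail q ε (N + L) = ctail q ε N := by
      unfold ctail
      apply tsum_congr
      intro j
      unfold cterm
      have he : ε (N + L + j) = ε (N + j) := by
        rw [show N + L + j = (N + j) + L from by omega]
        exact hεL _ (by omega)
      rw [he]
      congr 1
      apply Finset.prod_congr rfl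
      intro i _
      have hqi : q (N + L + i) = q (N + i) := by
        rw [show N + L + i = (N + i) + L from by omega]
        exact hqL _
      rw [hqi]
    set Q : ℝ := ∏ i ∈ Finset.range L, (q (N + i) : ℝ) with hQdef
    have hQlarge : (2:ℝ) ≤ Q := by
      have h2L : (2:ℝ) ^ L = ∏ _i ∈ Finset.range L, (2:ℝ) := by
        rw [Finset.prod_const, Finset.card_range]
      calc (2:ℝ) = 2 ^ 1 := (pow_one 2).symm
        _ ≤ 2 ^ L := by
            apply pow_le_pow_right₀ one_le_two hL
        _ = ∏ _i ∈ Finset.range L, (2:ℝ) := h2L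
        _ ≤ Q := by
            rw [hQdef]
            apply Finset.prod_le_prod (fun i _ => by norm_num)
            intro i _
            exact_mod_cast hq (N + i)
    have hQ0 : Q ≠ 0 := by linarith
    have hQ1 : Q - 1 ≠ 0 := by
      have h : (0:ℝ) < Q - 1 := by linarith
      exact h.ne'
    have hsplitN := ctail_split hq hε N L
    rw [htaileq] at hsplitN
    set C := ∑ k ∈ Finset.range L, cterm q ε N k with hCdef
    have hTNval : ctail q ε N = C * Q / (Q - 1) := by
      rw [eq_div_iff hQ1]
      have h : ctail q ε N * Q = (C + ctail q ε N / Q) * Q := by rw [← hsplitN]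
      rw [add_mul, div_mul_cancel₀ _ hQ0] at h
      linear_combination h
    set Sq : ℚ := ∑ k ∈ Finset.range N, (ε k : ℚ) / ∏ i ∈ Finset.range (k + 1), (q i : ℚ)
      with hSqdef
    set Cq : ℚ := ∑ k ∈ Finset.range L, (ε (N + k) : ℚ) /
        ∏ i ∈ Finset.range (k + 1), (q (N + i) : ℚ) with hCqdef
    set Qq : ℚ := ∏ i ∈ Finset.range L, (q (N + i) : ℚ) with hQqdef
    set Pq : ℚ := ∏ i ∈ Finset.range N, (q i : ℚ) with hPqdef
    have hCc : ((Cq : ℚ) : ℝ) = C := by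
      rw [hCqdef, hCdef]
      push_cast
      apply Finset.sum_congr rfl
      intro k _
      rw [cterm]
    have hQc : ((Qq : ℚ) : ℝ) = Q := by
      rw [hQqdef, hQdef]
      push_cast
      rfl
    have hSc : ((Sq : ℚ) : ℝ) = ∑ k ∈ Finset.range N, cterm q ε 0 k := by
      rw [hSqdef]
      push_cast
      apply Finset.sum_congr rfl
      intro k _
      simp [cterm]
    have hPc : ((Pq : ℚ) : ℝ) = ∏ i ∈ Finset.range N, (q i : ℝ) := by
      rw [hPqdef]
      push_cast
      rfl
    refine ⟨Sq + Cq * Qq / (Qq - 1) / Pq, ?_⟩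
    have hcast : ((Sq + Cq * Qq / (Qq - 1) / Pq : ℚ) : ℝ)
        = ((Sq : ℚ) : ℝ) + ((Cq : ℚ) : ℝ) * ((Qq : ℚ) : ℝ) / (((Qq : ℚ) : ℝ) - 1)
          / ((Pq : ℚ) : ℝ) := by
      push_cast
      ring
    rw [hcast, hCc, hQc, hSc, hPc, ← hTNval, ← hsplit0 N]
end

section
/- Let x = ∑_{k=1}^∞ ε_k/(q_1 q_2 ⋯ q_k) be a Cantor series representation, and suppose that every prime number divides q_k for infinitely many indices k. Then x is irrational if and only if both ε_k > 0 for infinitely many k and ε_k < q_k − 1 for infinitely many k. -/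
open Finset Filter

namespace CantorAux

variable {q ε : ℕ → ℕ}

def Qp (q : ℕ → ℕ) (n : ℕ) : ℕ := ∏ i ∈ Finset.range n, q i

/-- digit term -/
noncomputable def F (q ε : ℕ → ℕ) (k : ℕ) : ℝ := (ε k : ℝ) / (Qp q (k + 1) : ℝ)
/-- max digit term -/
noncomputable def G (q : ℕ → ℕ) (k : ℕ) : ℝ := ((q k : ℝ) - 1) / (Qp q (k + 1) : ℝ)
/-- reciprocal of product -/
noncomputable def R (q : ℕ → ℕ) (n : ℕ) : ℝ := ((Qp q n : ℝ))⁻¹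

lemma Qp_pos (hq : ∀ k, 2 ≤ q k) (n : ℕ) : 0 < Qp q n :=
  Finset.prod_pos fun i _ => lt_of_lt_of_le (by norm_num) (hq i)

lemma two_pow_le_Qp (hq : ∀ k, 2 ≤ q k) (n : ℕ) : 2 ^ n ≤ Qp q n := by
  calc 2 ^ n = ∏ _i ∈ Finset.range n, 2 := by simp [Finset.prod_const]
    _ ≤ Qp q n := Finset.prod_le_prod' fun i _ => hq i

lemma Qp_succ (n : ℕ) : Qp q (n + 1) = Qp q n * q n := Finset.prod_range_succ _ _

lemma Qp_dvd (m n : ℕ) (h : m ≤ n) : Qp q m ∣ Qp q n :=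
  Finset.prod_dvd_prod_of_subset _ _ _ (Finset.range_subset_range.mpr h)

lemma QpR_pos (hq : ∀ k, 2 ≤ q k) (n : ℕ) : (0:ℝ) < (Qp q n : ℝ) := by
  exact_mod_cast Qp_pos hq n

lemma R_pos (hq : ∀ k, 2 ≤ q k) (n : ℕ) : 0 < R q n := inv_pos.mpr (QpR_pos hq n)

lemma R_le (hq : ∀ k, 2 ≤ q k) (n : ℕ) : R q n ≤ (1 / 2 : ℝ) ^ n := by
  have h2 : (2:ℝ) ^ n ≤ (Qp q n : ℝ) := by exact_mod_cast two_pow_le_Qp hq n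
  have : ((Qp q n : ℝ))⁻¹ ≤ ((2:ℝ) ^ n)⁻¹ :=
    inv_anti₀ (by positivity) h2
  simpa [R, one_div, inv_pow] using this

lemma G_eq (hq : ∀ k, 2 ≤ q k) (k : ℕ) : G q k = R q k - R q (k + 1) := by
  have h1 : (Qp q k : ℝ) ≠ 0 := (QpR_pos hq k).ne'
  have hqk : (q k : ℝ) ≠ 0 := by
    have := hq k; positivity
  rw [G, R, R, Qp_succ]
  push_cast
  field_simp

lemma F_nonneg (hq : ∀ k, 2 ≤ q k) (k : ℕ) : 0 ≤ F q ε k := by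
  have := QpR_pos hq (k+1); unfold F; positivity

lemma F_le_G (hq : ∀ k, 2 ≤ q k) (hε : ∀ k, ε k < q k) (k : ℕ) : F q ε k ≤ G q k := by
  have hd := QpR_pos hq (k+1)
  have h1 : (ε k : ℝ) ≤ (q k : ℝ) - 1 := by
    have := hε k
    have : (ε k : ℝ) + 1 ≤ (q k : ℝ) := by exact_mod_cast this
    linarith
  exact div_le_div_of_nonneg_right h1 hd.le |>.trans_eq rfl

lemma G_nonneg (hq : ∀ k, 2 ≤ q k) (k : ℕ) : 0 ≤ G q k := by
  have hd := QpR_pos hq (k+1)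
  have h1 : (1:ℝ) ≤ q k := by exact_mod_cast le_trans (by norm_num) (hq k)
  unfold G
  have : (0:ℝ) ≤ (q k : ℝ) - 1 := by linarith
  positivity

lemma G_le (hq : ∀ k, 2 ≤ q k) (k : ℕ) : G q k ≤ (1/2:ℝ) ^ k := by
  rw [G_eq hq]
  have := R_pos hq (k+1)
  have := R_le hq k
  linarith

lemma summable_G (hq : ∀ k, 2 ≤ q k) : Summable (G q) :=
  Summable.of_nonneg_of_le (G_nonneg hq) (G_le hq) summable_geometric_two

lemma summable_F (hq : ∀ k, 2 ≤ q k) (hε : ∀ k, ε k < q k) : Summable (F q ε) :=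
  Summable.of_nonneg_of_le (F_nonneg hq) (fun k => (F_le_G hq hε k).trans (G_le hq k))
    summable_geometric_two

end CantorAux

namespace CantorAux

lemma R_tendsto (hq : ∀ k, 2 ≤ q k) : Tendsto (R q) atTop (nhds 0) := by
  apply squeeze_zero (fun n => (R_pos hq n).le) (R_le hq)
  exact tendsto_pow_atTop_nhds_zero_of_lt_one (by norm_num) (by norm_num)

lemma hasSum_G_tail (hq : ∀ k, 2 ≤ q k) (N : ℕ) :
    HasSum (fun k => G q (k + N)) (R q N) := by
  have hs : Summable (fun k => G q (k + N)) := (summable_nat_add_iff N).mpr (summable_G hq)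
  rw [hs.hasSum_iff_tendsto_nat]
  have hps : ∀ n, ∑ i ∈ Finset.range n, G q (i + N) = R q N - R q (N + n) := by
    intro n
    have := Finset.sum_range_sub' (f := fun i => R q (N + i)) n
    rw [show R q N - R q (N + n) = R q (N + 0) - R q (N + n) by norm_num, ← this]
    apply Finset.sum_congr rfl
    intro i _
    rw [G_eq hq]
    rw [show i + N = N + i by ring, show N + i + 1 = N + (i + 1) by ring]
  simp only [hps]
  have h2 : Tendsto (fun n => R q (N + n)) atTop (nhds 0) :=
    (R_tendsto hq).comp (tendsto_add_atTop_nat N  |>.congr (fun n => by ring_nf))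
  simpa using tendsto_const_nhds.sub h2

end CantorAux

namespace CantorAux

noncomputable def T (q ε : ℕ → ℕ) (N : ℕ) : ℝ := ∑' i, F q ε (i + N)

lemma summable_F_tail (hq : ∀ k, 2 ≤ q k) (hε : ∀ k, ε k < q k) (N : ℕ) :
    Summable (fun i => F q ε (i + N)) := (summable_nat_add_iff N).mpr (summable_F hq hε)

lemma T_nonneg (hq : ∀ k, 2 ≤ q k) (N : ℕ) : 0 ≤ T q ε N :=
  tsum_nonneg fun i => F_nonneg hq _

lemma T_le_R (hq : ∀ k, 2 ≤ q k) (hε : ∀ k, ε k < q k) (N : ℕ) : T q ε N ≤ R q N := by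
  rw [← (hasSum_G_tail hq N).tsum_eq]
  exact Summable.tsum_le_tsum (fun i => F_le_G hq hε _) (summable_F_tail hq hε N)
    (hasSum_G_tail hq N).summable

lemma T_pos (hq : ∀ k, 2 ≤ q k) (hε : ∀ k, ε k < q k) {N j : ℕ} (hj : N ≤ j)
    (hjε : 0 < ε j) : 0 < T q ε N := by
  have hFj : 0 < F q ε j := by
    have := QpR_pos hq (j+1)
    have : (0:ℝ) < (ε j : ℝ) := by exact_mod_cast hjε
    unfold F
    positivity
  have : F q ε ((j - N) + N) ≤ T q ε N :=
    Summable.le_tsum (summable_F_tail hq hε N) (j - N) fun i _ => F_nonneg hq _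
  rw [Nat.sub_add_cancel hj] at this
  linarith

lemma T_lt_R (hq : ∀ k, 2 ≤ q k) (hε : ∀ k, ε k < q k) {N j : ℕ} (hj : N ≤ j)
    (hjε : ε j < q j - 1) : T q ε N < R q N := by
  rw [← (hasSum_G_tail hq N).tsum_eq]
  apply Summable.tsum_lt_tsum (i := j - N) (fun i => F_le_G hq hε _) ?_
    (summable_F_tail hq hε N) (hasSum_G_tail hq N).summable
  rw [Nat.sub_add_cancel hj]
  have hd := QpR_pos hq (j+1)
  have h1 : (ε j : ℝ) < (q j : ℝ) - 1 := by
    have h2 := hq j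
    have : ε j + 1 < q j := by omega
    have : (ε j : ℝ) + 1 < (q j : ℝ) := by exact_mod_cast this
    linarith
  exact div_lt_div_of_pos_right h1 hd

lemma x_decomp (hq : ∀ k, 2 ≤ q k) (hε : ∀ k, ε k < q k) (N : ℕ) :
    (∑' k, F q ε k) = (∑ k ∈ Finset.range N, F q ε k) + T q ε N :=
  (Summable.sum_add_tsum_nat_add N (summable_F hq hε)).symm

end CantorAux

namespace CantorAux

lemma exists_dvd_Qp (hprime : ∀ p : ℕ, p.Prime → {k : ℕ | p ∣ q k}.Infinite) :
    ∀ b : ℕ, 0 < b → ∀ M : ℕ, ∃ N, M ≤ N ∧ b ∣ Qp q N := by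
  intro b
  induction b using Nat.strong_induction_on with
  | _ b ih =>
    intro hb M
    rcases eq_or_ne b 1 with rfl | hb1
    · exact ⟨M, le_rfl, one_dvd _⟩
    · set p := b.minFac with hp
      have hpp : p.Prime := Nat.minFac_prime hb1
      have hpd : p ∣ b := Nat.minFac_dvd b
      have hlt : b / p < b := Nat.div_lt_self hb hpp.one_lt
      have hpos : 0 < b / p := Nat.div_pos (Nat.le_of_dvd hb hpd) hpp.pos
      obtain ⟨N₁, hN₁M, hN₁d⟩ := ih (b / p) hlt hpos M
      obtain ⟨k, hk, hkN₁⟩ := (hprime p hpp).exists_gt N₁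
      refine ⟨k + 1, by omega, ?_⟩
      have hsplit : Qp q N₁ * ∏ i ∈ Finset.Ico N₁ (k + 1), q i = Qp q (k + 1) :=
        Finset.prod_range_mul_prod_Ico q (by omega)
      have h2 : p ∣ ∏ i ∈ Finset.Ico N₁ (k + 1), q i :=
        dvd_trans hk (Finset.dvd_prod_of_mem q (by simp [Finset.mem_Ico]; omega))
      have : b / p * p ∣ Qp q N₁ * ∏ i ∈ Finset.Ico N₁ (k + 1), q i :=
        mul_dvd_mul hN₁d h2
      rwa [Nat.div_mul_cancel hpd, hsplit] at this

/-- `Qp q N` times the head sum is an integer. -/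
lemma head_int (hq : ∀ k, 2 ≤ q k) (ε : ℕ → ℕ) (N : ℕ) :
    ∃ m : ℕ, (Qp q N : ℝ) * ∑ k ∈ Finset.range N, F q ε k = (m : ℝ) := by
  refine ⟨∑ k ∈ Finset.range N, ε k * (Qp q N / Qp q (k + 1)), ?_⟩
  rw [Finset.mul_sum]
  push_cast
  apply Finset.sum_congr rfl
  intro k hk
  have hkN : k + 1 ≤ N := by simpa [Nat.succ_le_iff] using Finset.mem_range.mp hk
  have hd : Qp q (k + 1) ∣ Qp q N := Qp_dvd _ _ hkN
  have hne : (Qp q (k + 1) : ℝ) ≠ 0 := (QpR_pos hq (k + 1)).ne'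
  rw [Nat.cast_div hd (by exact_mod_cast hne)]
  unfold F
  field_simp

end CantorAux

namespace CantorAux

lemma head_rat (q ε : ℕ → ℕ) (N : ℕ) :
    ((∑ k ∈ Finset.range N, (ε k : ℚ) / (Qp q (k + 1) : ℚ) : ℚ) : ℝ) =
      ∑ k ∈ Finset.range N, F q ε k := by
  push_cast
  rfl

end CantorAux

open CantorAux in
/-- (Marques, generalizing Sondow) Let `x = ∑ ε_k / (q_1 ⋯ q_k)` be a
Cantor series representation and suppose every prime divides `q_k` for infinitely many `k`.
Then `x` is irrational iff both `ε_k > 0` infinitely often and `ε_k < q_k − 1` infinitely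
often. (Sequences are 0-indexed.) -/
theorem cantor_irrational_iff_digits_infinitely_often
    (q ε : ℕ → ℕ) (hq : ∀ k, 2 ≤ q k) (hε : ∀ k, ε k < q k)
    (hprime : ∀ p : ℕ, p.Prime → {k : ℕ | p ∣ q k}.Infinite)
    (x : ℝ)
    (hx : x = ∑' k : ℕ, (ε k : ℝ) / ∏ i ∈ Finset.range (k + 1), (q i : ℝ)) :
    Irrational x ↔
      ({k : ℕ | 0 < ε k}.Infinite ∧ {k : ℕ | ε k < q k - 1}.Infinite) := by
  have hx' : x = ∑' k, F q ε k := by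
    rw [hx]; apply tsum_congr; intro k; simp [F, Qp, Nat.cast_prod]
  constructor
  · -- Irrational → both infinite; contrapositive
    contrapose
    intro h
    rw [not_and_or] at h
    rcases h with h | h <;> rw [Set.not_infinite] at h
    · -- ε k = 0 eventually
      obtain ⟨N0, hN0⟩ := h.bddAbove
      set N := N0 + 1 with hN
      have hz : ∀ k, N ≤ k → ε k = 0 := by
        intro k hk
        by_contra hne
        have : k ∈ {k : ℕ | 0 < ε k} := by simp [Set.mem_setOf_eq]; omega
        have := hN0 this
        omega
      have hT : T q ε N = 0 := by
        unfold T
        have : ∀ i : ℕ, F q ε (i + N) = 0 := by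
          intro i
          unfold F
          rw [hz (i + N) (by omega)]
          simp
        simp [this]
      have hxr : x = ∑ k ∈ Finset.range N, F q ε k := by
        rw [hx', x_decomp hq hε N, hT, add_zero]
      rw [hxr, ← head_rat q ε N]
      exact Rat.not_irrational _
    · -- ε k = q k - 1 eventually
      obtain ⟨N0, hN0⟩ := h.bddAbove
      set N := N0 + 1 with hN
      have hz : ∀ k, N ≤ k → ε k = q k - 1 := by
        intro k hk
        by_contra hne
        have h2 := hε k
        have : k ∈ {k : ℕ | ε k < q k - 1} := by simp only [Set.mem_setOf_eq]; omega
        have := hN0 this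
        omega
      have hT : T q ε N = R q N := by
        rw [T, ← (hasSum_G_tail hq N).tsum_eq]
        apply tsum_congr
        intro i
        unfold F G
        rw [hz (i + N) (by omega)]
        congr 1
        have h2 := hq (i + N)
        rw [Nat.cast_sub (by omega : 1 ≤ q (i + N)), Nat.cast_one]
      have hxr : x = ∑ k ∈ Finset.range N, F q ε k + R q N := by
        rw [hx', x_decomp hq hε N, hT]
      have hxq : x =
          (((∑ k ∈ Finset.range N, (ε k : ℚ) / (Qp q (k + 1) : ℚ)) + (Qp q N : ℚ)⁻¹ : ℚ) : ℝ) := by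
        rw [hxr, Rat.cast_add, head_rat]
        congr 1
        rw [R]
        push_cast
        rfl
      rw [hxq]
      exact Rat.not_irrational _
  · rintro ⟨hA, hB⟩ ⟨r, hr⟩
    obtain ⟨N, -, hNd⟩ := exists_dvd_Qp hprime r.den r.pos 0
    obtain ⟨j1, hj1, hj1N⟩ := hA.exists_gt N
    obtain ⟨j2, hj2, hj2N⟩ := hB.exists_gt N
    obtain ⟨m, hm⟩ := head_int hq ε N
    set c : ℕ := Qp q N / r.den with hc
    have hcden : c * r.den = Qp q N := Nat.div_mul_cancel hNd
    have hQx : (Qp q N : ℝ) * x = (c : ℝ) * (r.num : ℝ) := by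
      rw [← hr, Rat.cast_def]
      have hden : (r.den : ℝ) ≠ 0 := by exact_mod_cast r.den_nz  -- check name
      have hQc : (Qp q N : ℝ) = (c : ℝ) * (r.den : ℝ) := by exact_mod_cast hcden.symm
      rw [hQc]
      field_simp
    have hdecomp := x_decomp hq hε N
    have hTz : ((c * r.num - m : ℤ) : ℝ) = (Qp q N : ℝ) * T q ε N := by
      push_cast
      rw [← hQx, hx', hdecomp]
      rw [← hm]
      ring
    have hQpos := QpR_pos hq (q := q) N
    have hTpos : 0 < T q ε N := T_pos hq hε hj1N.le hj1
    have hTlt : T q ε N < R q N := T_lt_R hq hε hj2N.le hj2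
    have h1 : (Qp q N : ℝ) * T q ε N < 1 := by
      have := mul_lt_mul_of_pos_left hTlt hQpos
      rwa [R, mul_inv_cancel₀ hQpos.ne'] at this
    have h0 : 0 < (Qp q N : ℝ) * T q ε N := by positivity
    rw [← hTz] at h0 h1
    have h0' : (0:ℤ) < c * r.num - m := by exact_mod_cast h0
    have h1' : (c * r.num - m : ℤ) < 1 := by exact_mod_cast h1
    omega
end
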